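/- Let G be a finite group, H a normal subgroup of prime index p, and F an algebraically closed field of characteristic 0 or coprime to |G|. Let η be an irreducible F-representation of H whose G/H-orbit under conjugation consists of p distinct points η = η_1, η_2, …, η_p. Then the induced representations η_1↑_H^G, η_2↑_H^G, …, η_p↑_H^G are all equivalent to a common representation ρ of G, and ρ is irreducible. -/

import Mathlib

open scoped TensorProduct

section Defs

variable {k : Type*} [Field k] {M : Type*} [Monoid M]

/-- Equivalence (isomorphism) of representations of a monoid over a field. -/
def RepIso {V W : Type*} [AddCommGroup V] [Module k V] [AddCommGroup W] [Module k W]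
    (ρ : Representation k M V) (ρ' : Representation k M W) : Prop :=
  ∃ e : V ≃ₗ[k] W, ∀ (g : M) (v : V), e (ρ g v) = ρ' g (e v)

/-- Irreducibility of a representation: the space is nonzero and has no proper nonzero
invariant subspace. -/
def RepIrred {V : Type*} [AddCommGroup V] [Module k V] (ρ : Representation k M V) : Prop :=
  Nontrivial V ∧ ∀ U : Submodule k V, (∀ g : M, ∀ v ∈ U, ρ g v ∈ U) → U = ⊥ ∨ U = ⊤

variable {G : Type*} [Group G]

/-- Conjugation by `x` as a monoid homomorphism of a normal subgroup. -/
def conjHom {H : Subgroup G} (hH : H.Normal) (x : G) : H →* H :=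
  MonoidHom.mk' (fun h => ⟨x * (h : G) * x⁻¹, hH.conj_mem (h : G) h.2 x⟩)
    (by intro a b; ext; push_cast; group)

/-- The conjugate representation `η^x`, `η^x(h) = η (x h x⁻¹)`. -/
def ConjRep {H : Subgroup G} (hH : H.Normal) (x : G) {V : Type*} [AddCommGroup V] [Module k V]
    (η : Representation k H V) : Representation k H V :=
  η.comp (conjHom hH x)

/-- `ρ` is (a model of) the representation of `G` induced from the representation `η` of the
subgroup `H`: there is an `H`-equivariant embedding `ι : V → W` and `W` is the internal direct
sum, over the cosets `gH`, of the translates `ρ(g)(ι V)`. -/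
def IsInducedFrom (H : Subgroup G) {V W : Type*} [AddCommGroup V] [Module k V]
    [AddCommGroup W] [Module k W]
    (η : Representation k H V) (ρ : Representation k G W) : Prop :=
  ∃ ι : V →ₗ[k] W, Function.Injective ι ∧
    (∀ (h : H) (v : V), ι (η h v) = ρ (h : G) (ι v)) ∧
    ∃ S : G ⧸ H → Submodule k W,
      (∀ g : G, S (g : G ⧸ H) = (LinearMap.range ι).map (ρ g)) ∧
      iSupIndep S ∧ iSup S = ⊤

/-- The subrepresentation on an invariant subspace. -/
def SubRep {V : Type*} [AddCommGroup V] [Module k V] (ρ : Representation k M V)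
    (U : Submodule k V) (hU : ∀ g : M, ∀ v ∈ U, ρ g v ∈ U) : Representation k M U where
  toFun g := LinearMap.restrict (ρ g) (hU g)
  map_one' := by ext v; simp [LinearMap.restrict_apply]
  map_mul' g g' := by ext v; simp [LinearMap.restrict_apply]

/-- The direct sum of a family of representations (realized on the product space). -/
def PiRep {ι : Type*} {W : ι → Type*} [∀ i, AddCommGroup (W i)] [∀ i, Module k (W i)]
    (ρ : ∀ i, Representation k M (W i)) : Representation k M (∀ i, W i) where
  toFun g := LinearMap.pi fun i => (ρ i g).comp (LinearMap.proj i)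
  map_one' := by ext v; simp
  map_mul' g g' := by ext v; simp

/-- Extension of scalars of a representation along a field extension `F ⊆ E`. -/
noncomputable def BaseChangeRep {F : Type*} [Field F] (E : Type*) [Field E] [Algebra F E]
    {V : Type*} [AddCommGroup V] [Module F V] (ρ : Representation F M V) :
    Representation E M (E ⊗[F] V) where
  toFun g := LinearMap.baseChange E (ρ g)
  map_one' := by ext v; simp
  map_mul' g g' := by ext v; simp [map_mul]

open scoped Classical in
/-- The conjugacy class sum of `x` in the group algebra. -/
noncomputable def classSum (k : Type*) [Field k] {G : Type*} [Group G] [Fintype G] (x : G) :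
    MonoidAlgebra k G :=
  ∑ g : G, if IsConj x g then MonoidAlgebra.single g (1 : k) else 0

/-- A primitive central idempotent of a ring. -/
def IsPrimCentralIdem {R : Type*} [Ring R] (e : R) : Prop :=
  e ≠ 0 ∧ IsIdempotentElem e ∧ e ∈ Set.center R ∧
    ∀ f : R, f ∈ Set.center R → IsIdempotentElem f → f * e = f → f = 0 ∨ f = e

/-- `e` is the primitive central idempotent of the group algebra attached to the irreducible
representation `ρ`: it is a primitive central idempotent acting as the identity on `ρ`. -/
noncomputable def IsIdemFor {V : Type*} [AddCommGroup V] [Module k V]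
    (ρ : Representation k M V) (e : MonoidAlgebra k M) : Prop :=
  IsPrimCentralIdem e ∧ ρ.asAlgebraHom e = 1

/-- `ρ'` is the twist of the `E`-representation `ρ` by the automorphism `γ` of `E` over `F`. -/
def IsTwist {F E : Type*} [Field F] [Field E] [Algebra F E]
    {V W : Type*} [AddCommGroup V] [Module E V] [AddCommGroup W] [Module E W]
    (γ : E ≃ₐ[F] E) (ρ : Representation E M V) (ρ' : Representation E M W) : Prop :=
  ∃ e : V ≃+ W, (∀ (c : E) (v : V), e (c • v) = γ c • e v) ∧
    ∀ (g : M) (v : V), e (ρ g v) = ρ' g (e v)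

/-- Two `E`-representations are Galois conjugate over `F`. -/
def IsGaloisConj (F : Type*) {E : Type*} [Field F] [Field E] [Algebra F E]
    {V W : Type*} [AddCommGroup V] [Module E V] [AddCommGroup W] [Module E W]
    (ρ : Representation E M V) (ρ' : Representation E M W) : Prop :=
  ∃ γ : E ≃ₐ[F] E, IsTwist γ ρ ρ'

/-- The canonical embedding of the group algebra of a subgroup into the group algebra
of the ambient group. -/
noncomputable def algEmb (k : Type*) [Field k] {G : Type*} [Group G] (H : Subgroup G) :
    MonoidAlgebra k H →ₐ[k] MonoidAlgebra k G :=
  MonoidAlgebra.mapDomainAlgHom k k H.subtype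

end Defs


section Aux

variable {F : Type*} [Field F] {G : Type*} [Group G]

-- basic equivalence-relation lemmas for RepIso
lemma repIso_refl {M : Type*} [Monoid M] {V : Type*} [AddCommGroup V] [Module F V]
    (ρ : Representation F M V) : RepIso ρ ρ :=
  ⟨LinearEquiv.refl F V, fun _ _ => rfl⟩

lemma repIso_symm {M : Type*} [Monoid M] {V W : Type*} [AddCommGroup V] [Module F V]
    [AddCommGroup W] [Module F W] {ρ : Representation F M V} {ρ' : Representation F M W}
    (h : RepIso ρ ρ') : RepIso ρ' ρ := by
  obtain ⟨e, he⟩ := h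
  refine ⟨e.symm, fun g w => e.injective ?_⟩
  rw [e.apply_symm_apply, he, e.apply_symm_apply]

lemma repIso_trans {M : Type*} [Monoid M] {V W X : Type*} [AddCommGroup V] [Module F V]
    [AddCommGroup W] [Module F W] [AddCommGroup X] [Module F X]
    {ρ : Representation F M V} {ρ' : Representation F M W} {ρ'' : Representation F M X}
    (h : RepIso ρ ρ') (h' : RepIso ρ' ρ'') : RepIso ρ ρ'' := by
  obtain ⟨e, he⟩ := h; obtain ⟨f, hf⟩ := h'
  exact ⟨e.trans f, fun g v => by simp [he, hf]⟩

lemma rep_apply_apply {M : Type*} [Monoid M] {V : Type*} [AddCommGroup V] [Module F V]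
    (ρ : Representation F M V) (a b : M) (v : V) : ρ a (ρ b v) = ρ (a * b) v := by
  rw [map_mul]; rfl

lemma rep_injective {V : Type*} [AddCommGroup V] [Module F V]
    (ρ : Representation F G V) (x : G) : Function.Injective (ρ x) := by
  intro a b hab
  have := congrArg (ρ x⁻¹) hab
  rwa [rep_apply_apply, rep_apply_apply, inv_mul_cancel, map_one, Module.End.one_apply,
    Module.End.one_apply] at this

lemma conjHom_coe {H : Subgroup G} (hH : H.Normal) (x : G) (h : H) :
    ((conjHom hH x h : H) : G) = x * (h : G) * x⁻¹ := rfl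

lemma conjRep_apply {H : Subgroup G} (hH : H.Normal) (x : G) {V : Type*} [AddCommGroup V]
    [Module F V] (η : Representation F H V) (h : H) :
    ConjRep hH x η h = η (conjHom hH x h) := rfl

lemma conjRep_conjRep {H : Subgroup G} (hH : H.Normal) (x y : G) {V : Type*} [AddCommGroup V]
    [Module F V] (η : Representation F H V) :
    ConjRep hH x (ConjRep hH y η) = ConjRep hH (y * x) η := by
  refine MonoidHom.ext fun h => congrArg η ?_
  ext
  simp only [conjHom_coe]
  group

lemma conjRep_one {H : Subgroup G} (hH : H.Normal) {V : Type*} [AddCommGroup V]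
    [Module F V] (η : Representation F H V) : ConjRep hH 1 η = η := by
  refine MonoidHom.ext fun h => congrArg η ?_
  ext
  simp [conjHom_coe]

/-- Conjugating by an element of `H` does not change the isomorphism class. -/
lemma conjRep_coe_iso {H : Subgroup G} (hH : H.Normal) (h : H) {V : Type*} [AddCommGroup V]
    [Module F V] (σ : Representation F H V) : RepIso (ConjRep hH (↑h) σ) σ := by
  have comp : ∀ a b : H, (σ a).comp (σ b) = σ (a * b) := fun a b => by rw [map_mul]; rfl
  refine ⟨LinearEquiv.ofLinear (σ h⁻¹) (σ h) ?_ ?_, fun h' v => ?_⟩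
  · rw [comp, inv_mul_cancel, map_one]; rfl
  · rw [comp, mul_inv_cancel, map_one]; rfl
  · have hc : conjHom hH (↑h) h' = h * h' * h⁻¹ := by
      ext; simp [conjHom_coe]
    simp only [LinearEquiv.ofLinear_apply, conjRep_apply, hc, rep_apply_apply]
    congr 1
    group

lemma conjRep_iso_congr {H : Subgroup G} (hH : H.Normal) (x : G) {V W : Type*}
    [AddCommGroup V] [Module F V] [AddCommGroup W] [Module F W]
    {σ : Representation F H V} {σ' : Representation F H W} (h : RepIso σ σ') :
    RepIso (ConjRep hH x σ) (ConjRep hH x σ') := by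
  obtain ⟨e, he⟩ := h
  exact ⟨e, fun h' v => he (conjHom hH x h') v⟩

/-- A model of the representation induced from `σ` is also induced from any conjugate of `σ`. -/
lemma isInducedFrom_conj {H : Subgroup G} [hHn : H.Normal] (hH : H.Normal) (x : G)
    {V W : Type*} [AddCommGroup V] [Module F V] [AddCommGroup W] [Module F W]
    {σ : Representation F H V} {ρ : Representation F G W}
    (hind : IsInducedFrom H σ ρ) : IsInducedFrom H (ConjRep hH x σ) ρ := by
  obtain ⟨ι, hinj, heq, S, hS, hindep, hsup⟩ := hind
  refine ⟨(ρ x⁻¹) ∘ₗ ι, (rep_injective ρ x⁻¹).comp hinj, fun h v => ?_,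
    fun c => S (c * ((x : G ⧸ H)
)⁻¹), fun y => ?_, ?_, ?_⟩
  · simp only [LinearMap.comp_apply, conjRep_apply, heq, rep_apply_apply, conjHom_coe]
    congr 1
    group
  · have h1 : ((y : G ⧸ H) * ((x : G ⧸ H))⁻¹) = ((y * x⁻¹ : G) : G ⧸ H) := by
      rw [QuotientGroup.mk_mul, QuotientGroup.mk_inv]
    show S ((y : G ⧸ H) * ((x : G ⧸ H))⁻¹) = _
    rw [h1, hS]
    have h2 : LinearMap.range ((ρ x⁻¹) ∘ₗ ι) = (LinearMap.range ι).map (ρ x⁻¹) :=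
      LinearMap.range_comp _ _
    rw [h2, ← Submodule.map_comp]
    congr 1
    rw [← Module.End.mul_eq_comp, ← map_mul]
  · exact hindep.comp (Equiv.mulRight ((x : G ⧸ H))⁻¹).injective
  · rw [← hsup]
    exact ((Equiv.mulRight ((x : G ⧸ H))⁻¹).surjective.iSup_comp S)

/-- Two representations embedded `M`-equivariantly in the same representation with equal
ranges are isomorphic. -/
lemma transfer_iso {M : Type*} [Monoid M] {V₁ V₂ W : Type*}
    [AddCommGroup V₁] [Module F V₁] [AddCommGroup V₂] [Module F V₂]
    [AddCommGroup W] [Module F W]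
    (τ : Representation F M W) {σ₁ : Representation F M V₁} {σ₂ : Representation F M V₂}
    (a : V₁ →ₗ[F] W) (b : V₂ →ₗ[F] W) (ha : Function.Injective a) (hb : Function.Injective b)
    (hr : LinearMap.range a = LinearMap.range b)
    (ha' : ∀ m v, a (σ₁ m v) = τ m (a v)) (hb' : ∀ m v, b (σ₂ m v) = τ m (b v)) :
    RepIso σ₁ σ₂ := by
  let e : V₁ ≃ₗ[F] V₂ :=
    (LinearEquiv.ofInjective a ha).trans ((LinearEquiv.ofEq _ _ hr).trans
      (LinearEquiv.ofInjective b hb).symm)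
  have key : ∀ v, b (e v) = a v := by
    intro v
    show b ((LinearEquiv.ofInjective b hb).symm _) = _
    rw [LinearEquiv.ofInjective_symm_apply]
    rfl
  refine ⟨e, fun m v => hb ?_⟩
  rw [key, hb', key, ha']

end Aux


section Uniq

variable {F : Type*} [Field F] {G : Type*} [Group G]

open DirectSum

/-- Any two models of the representation induced from `σ` are isomorphic. -/
lemma induced_unique {H : Subgroup G} {V W W' : Type*} [AddCommGroup V] [Module F V]
    [AddCommGroup W] [Module F W] [AddCommGroup W'] [Module F W']
    {σ : Representation F H V} {ρ : Representation F G W} {ρ' : Representation F G W'}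
    (hi : IsInducedFrom H σ ρ) (hi' : IsInducedFrom H σ ρ') : RepIso ρ ρ' := by
  classical
  obtain ⟨ι, hinj, heq, S, hS, hindep, hsup⟩ := hi
  obtain ⟨ι', hinj', heq', S', hS', hindep', hsup'⟩ := hi'
  have hSc : ∀ c : G ⧸ H, S c = Submodule.map (ρ (c.out)) (LinearMap.range ι) := by
    intro c
    have := hS c.out
    rwa [QuotientGroup.out_eq'] at this
  have hSc' : ∀ c : G ⧸ H, S' c = Submodule.map (ρ' (c.out)) (LinearMap.range ι') := by
    intro c
    have := hS' c.out
    rwa [QuotientGroup.out_eq'] at this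
  have hint : DirectSum.IsInternal S :=
    (DirectSum.isInternal_submodule_iff_iSupIndep_and_iSup_eq_top S).mpr ⟨hindep, hsup⟩
  have hint' : DirectSum.IsInternal S' :=
    (DirectSum.isInternal_submodule_iff_iSupIndep_and_iSup_eq_top S').mpr ⟨hindep', hsup'⟩
  set Φ : (⨁ c, S c) ≃ₗ[F] W := LinearEquiv.ofBijective (coeLinearMap S)
    (@id (Function.Bijective (coeLinearMap S)) hint) with hΦ
  set Φ' : (⨁ c, S' c) ≃ₗ[F] W' := LinearEquiv.ofBijective (coeLinearMap S')
    (@id (Function.Bijective (coeLinearMap S')) hint') with hΦ'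
  -- the equivalence `V ≃ S c` given by `v ↦ ρ (out c) (ι v)`
  have hmem : ∀ (c : G ⧸ H) (v : V), ρ (c.out) (ι v) ∈ S c := by
    intro c v
    rw [hSc]
    exact ⟨ι v, ⟨v, rfl⟩, rfl⟩
  have hmem' : ∀ (c : G ⧸ H) (v : V), ρ' (c.out) (ι' v) ∈ S' c := by
    intro c v
    rw [hSc']
    exact ⟨ι' v, ⟨v, rfl⟩, rfl⟩
  have hbij : ∀ c : G ⧸ H,
      Function.Bijective (((ρ (c.out)) ∘ₗ ι).codRestrict (S c) (hmem c)) := by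
    intro c
    constructor
    · intro v v' hv
      have : ρ (c.out) (ι v) = ρ (c.out) (ι v') := congrArg Subtype.val hv
      exact hinj (rep_injective ρ _ this)
    · rintro ⟨w, hw⟩
      rw [hSc] at hw
      obtain ⟨-, ⟨v, rfl⟩, rfl⟩ := hw
      exact ⟨v, rfl⟩
  have hbij' : ∀ c : G ⧸ H,
      Function.Bijective (((ρ' (c.out)) ∘ₗ ι').codRestrict (S' c) (hmem' c)) := by
    intro c
    constructor
    · intro v v' hv
      have : ρ' (c.out) (ι' v) = ρ' (c.out) (ι' v') := congrArg Subtype.val hv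
      exact hinj' (rep_injective ρ' _ this)
    · rintro ⟨w, hw⟩
      rw [hSc'] at hw
      obtain ⟨-, ⟨v, rfl⟩, rfl⟩ := hw
      exact ⟨v, rfl⟩
  set A : ∀ c : G ⧸ H, V ≃ₗ[F] S c := fun c => LinearEquiv.ofBijective _ (hbij c) with hA
  set A' : ∀ c : G ⧸ H, V ≃ₗ[F] S' c := fun c => LinearEquiv.ofBijective _ (hbij' c) with hA'
  set μ : (⨁ c, S c) ≃ₗ[F] (⨁ c, S' c) :=
    DFinsupp.mapRange.linearEquiv (fun c => (A c).symm.trans (A' c)) with hμ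
  set e : W ≃ₗ[F] W' := Φ.symm.trans (μ.trans Φ') with he
  have hAcoe : ∀ (c : G ⧸ H) (v : V), ((A c v : S c) : W) = ρ (c.out) (ι v) := fun c v => rfl
  have hA'coe : ∀ (c : G ⧸ H) (v : V), ((A' c v : S' c) : W') = ρ' (c.out) (ι' v) :=
    fun c v => rfl
  -- key computation on representatives
  have key0 : ∀ (c : G ⧸ H) (v : V), e (ρ (c.out) (ι v)) = ρ' (c.out) (ι' v) := by
    intro c v
    have h1 : Φ.symm (ρ (c.out) (ι v)) = DirectSum.of (fun c => S c) c ((A c) v) := by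
      rw [LinearEquiv.symm_apply_eq, hΦ, LinearEquiv.ofBijective_apply, coeLinearMap_of, hAcoe]
    have h2 : μ (DirectSum.of (fun c => S c) c ((A c) v))
        = DirectSum.of (fun c => S' c) c ((A' c) v) := by
      rw [hμ]
      show DFinsupp.mapRange (fun j x => ((A j).symm.trans (A' j)) x)
          (fun j => map_zero _) (DFinsupp.single c ((A c) v)) = DFinsupp.single c ((A' c) v)
      rw [DFinsupp.mapRange_single]
      congr 1
      rw [LinearEquiv.trans_apply, LinearEquiv.symm_apply_apply]
    have h3 : e (ρ (c.out) (ι v)) = Φ' (μ (Φ.symm (ρ (c.out) (ι v)))) := rfl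
    rw [h3, h1, h2, hΦ', LinearEquiv.ofBijective_apply, coeLinearMap_of, hA'coe]
  -- key computation for all group elements
  have key : ∀ (x : G) (v : V), e (ρ x (ι v)) = ρ' x (ι' v) := by
    intro x v
    set c : G ⧸ H := (x : G ⧸ H) with hc
    have hcc : ((c.out : G) : G ⧸ H) = (x : G ⧸ H) := by rw [QuotientGroup.out_eq']
    have hmemH : (c.out)⁻¹ * x ∈ H := QuotientGroup.eq.mp hcc
    set h : H := ⟨(c.out)⁻¹ * x, hmemH⟩ with hh
    have hx : c.out * ((h : H) : G) = x := by rw [hh]; exact mul_inv_cancel_left _ _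
    have e1 : ρ x (ι v) = ρ (c.out) (ι (σ h v)) := by
      rw [heq h v, rep_apply_apply, hx]
    have e2 : ρ' x (ι' v) = ρ' (c.out) (ι' (σ h v)) := by
      rw [heq' h v, rep_apply_apply, hx]
    rw [e1, e2, key0]
  refine ⟨e, fun x w => ?_⟩
  have hker : (⊤ : Submodule F W) ≤ LinearMap.ker
      ((e.toLinearMap ∘ₗ ρ x) - ((ρ' x) ∘ₗ e.toLinearMap)) := by
    rw [← hsup]
    refine iSup_le fun c w hw => ?_
    rw [hSc] at hw
    obtain ⟨-, ⟨v, rfl⟩, rfl⟩ := hw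
    simp only [LinearMap.mem_ker, LinearMap.sub_apply, LinearMap.comp_apply,
      LinearEquiv.coe_coe]
    rw [rep_apply_apply, key, key0, rep_apply_apply, sub_self]
  have h0 := hker (Submodule.mem_top : w ∈ (⊤ : Submodule F W))
  rw [LinearMap.mem_ker, LinearMap.sub_apply, LinearMap.comp_apply, LinearMap.comp_apply] at h0
  exact sub_eq_zero.mp h0

end Uniq


section Irred

variable {F : Type*} [Field F] {G : Type*} [Group G]

open DirectSum

/-- A representation induced from an irreducible representation whose conjugates over distinct
cosets are pairwise non-isomorphic is irreducible. -/
lemma induced_irred {H : Subgroup G} (hH : H.Normal)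
    {V W : Type*} [AddCommGroup V] [Module F V] [AddCommGroup W] [Module F W]
    {η : Representation F H V} {ρ : Representation F G W}
    (hirr : RepIrred η)
    (hconj : ∀ x y : G, (x : G ⧸ H) ≠ (y : G ⧸ H) →
      ¬ RepIso (ConjRep hH x η) (ConjRep hH y η))
    (hind : IsInducedFrom H η ρ) : RepIrred ρ := by
  classical
  obtain ⟨ι, hinj, heq, S, hS, hindep, hsup⟩ := hind
  have hSc : ∀ c : G ⧸ H, S c = Submodule.map (ρ (c.out)) (LinearMap.range ι) := by
    intro c
    have := hS c.out
    rwa [QuotientGroup.out_eq'] at this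
  have hint : DirectSum.IsInternal S :=
    (DirectSum.isInternal_submodule_iff_iSupIndep_and_iSup_eq_top S).mpr ⟨hindep, hsup⟩
  set Φ : (⨁ c, S c) ≃ₗ[F] W := LinearEquiv.ofBijective (coeLinearMap S)
    (@id (Function.Bijective (coeLinearMap S)) hint) with hΦ
  set π : (G ⧸ H) → (W →ₗ[F] W) :=
    fun c => (S c).subtype ∘ₗ ((DFinsupp.lapply c : (⨁ c, S c) →ₗ[F] S c)
      ∘ₗ (Φ.symm : W ≃ₗ[F] (⨁ c, S c)).toLinearMap) with hπ
  have hπapp : ∀ (c : G ⧸ H) (w : W), π c w = ((Φ.symm w) c : W) := fun c w => rfl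
  -- basic properties of the projections
  have pmem : ∀ (c : G ⧸ H) (w : W), π c w ∈ S c := fun c w => ((Φ.symm w) c).2
  have psame : ∀ (c : G ⧸ H) (w : W), w ∈ S c → π c w = w := by
    intro c w hw
    rw [hπapp, hint.ofBijective_coeLinearMap_of_mem hw]
  have pne : ∀ (c c' : G ⧸ H), c ≠ c' → ∀ w ∈ S c, π c' w = 0 := by
    intro c c' hcc w hw
    rw [hπapp, hint.ofBijective_coeLinearMap_of_mem_ne hcc hw, ZeroMemClass.coe_zero]
  have pzero : ∀ w : W, (∀ c, π c w = 0) → w = 0 := by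
    intro w hw
    have h0 : Φ.symm w = 0 := by
      refine DFinsupp.ext fun c => ?_
      exact Subtype.ext (hw c)
    have := congrArg Φ h0
    rwa [Φ.apply_symm_apply, map_zero] at this
  -- stability of the pieces under the group action
  have smap : ∀ (x : G) (c : G ⧸ H), ∀ w ∈ S c, ρ x w ∈ S ((x : G ⧸ H) * c) := by
    intro x c w hw
    rw [hSc] at hw
    obtain ⟨-, ⟨v, rfl⟩, rfl⟩ := hw
    have h1 : ((x * c.out : G) : G ⧸ H) = (x : G ⧸ H) * c := by
      rw [QuotientGroup.mk_mul, QuotientGroup.out_eq']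
    rw [← h1, hS, rep_apply_apply]
    exact ⟨ι v, ⟨v, rfl⟩, rfl⟩
  have hcoeH : ∀ h : H, (((h : G) : G ⧸ H)) = 1 := by
    intro h
    rw [QuotientGroup.eq_one_iff]
    exact h.2
  have smapH : ∀ (h : H) (c : G ⧸ H), ∀ w ∈ S c, ρ (h : G) w ∈ S c := by
    intro h c w hw
    have := smap (h : G) c w hw
    rwa [hcoeH, one_mul] at this
  -- the projections are `H`-equivariant
  have pequiv : ∀ (h : H) (c : G ⧸ H) (w : W), π c (ρ (h : G) w) = ρ (h : G) (π c w) := by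
    intro h c
    have hker : (⊤ : Submodule F W) ≤ LinearMap.ker
        ((π c ∘ₗ ρ (h : G)) - (ρ (h : G) ∘ₗ π c)) := by
      rw [← hsup]
      refine iSup_le fun c' w hw => ?_
      rw [LinearMap.mem_ker]
      show π c (ρ ((h : H) : G) w) - ρ ((h : H) : G) (π c w) = 0
      rcases eq_or_ne c' c with rfl | hne
      · rw [psame c' _ (smapH h c' w hw), psame c' w hw, sub_self]
      · rw [pne c' c hne _ (smapH h c' w hw), pne c' c hne w hw, map_zero, sub_self]
    intro w
    have h0 := hker (Submodule.mem_top : w ∈ (⊤ : Submodule F W))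
    rw [LinearMap.mem_ker] at h0
    have h0' : π c (ρ ((h : H) : G) w) - ρ ((h : H) : G) (π c w) = 0 := h0
    exact sub_eq_zero.mp h0'
  -- each piece is an irreducible `H`-submodule
  have hrange : ∀ c : G ⧸ H, LinearMap.range ((ρ (c.out)) ∘ₗ ι) = S c := by
    intro c
    rw [LinearMap.range_comp, hSc]
  have irredS : ∀ (c : G ⧸ H) (N : Submodule F W), N ≤ S c →
      (∀ (h : H), ∀ w ∈ N, ρ (h : G) w ∈ N) → N = ⊥ ∨ N = S c := by
    intro c N hNle hNinv
    set gc : V →ₗ[F] W := (ρ (c.out)) ∘ₗ ι with hgc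
    have hgcinj : Function.Injective gc := (rep_injective ρ _).comp hinj
    set N' : Submodule F V := Submodule.comap gc N with hN'
    have hN'inv : ∀ (h : H), ∀ v ∈ N', η h v ∈ N' := by
      intro h v hv
      have h1 : gc (η h v) = ρ ((conjHom hH (c.out) h : H) : G) (gc v) := by
        rw [hgc]
        simp only [LinearMap.comp_apply, heq, rep_apply_apply, conjHom_coe]
        congr 1
        group
      have h2 : ρ ((conjHom hH (c.out) h : H) : G) (gc v) ∈ N :=
        hNinv _ _ (Submodule.mem_comap.mp hv)
      rw [hN', Submodule.mem_comap, h1]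
      exact h2
    rcases hirr.2 N' hN'inv with hbot | htop
    · left
      rw [Submodule.eq_bot_iff]
      intro w hw
      have hw' : w ∈ LinearMap.range gc := by rw [hrange]; exact hNle hw
      obtain ⟨v, rfl⟩ := hw'
      have : v ∈ N' := hw
      rw [hbot, Submodule.mem_bot] at this
      rw [this, map_zero]
    · right
      refine le_antisymm hNle fun w hw => ?_
      rw [← hrange] at hw
      obtain ⟨v, rfl⟩ := hw
      have : v ∈ N' := by rw [htop]; trivial
      exact this
  constructor
  · -- nontriviality
    haveI := hirr.1
    obtain ⟨v, hv⟩ := exists_ne (0 : V)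
    refine ⟨⟨ι v, 0, fun h => hv ?_⟩⟩
    exact hinj (by rw [h, map_zero])
  intro U hU
  rcases eq_or_ne U ⊥ with rfl | hUne
  · left; rfl
  right
  obtain ⟨u, huU, hune⟩ := Submodule.ne_bot_iff U |>.mp hUne
  -- if one piece is contained in U, then U is everything
  have stepTop : ∀ c0 : G ⧸ H, S c0 ≤ U → U = ⊤ := by
    intro c0 hc0
    rw [eq_top_iff, ← hsup]
    refine iSup_le fun c w hw => ?_
    rw [hSc] at hw
    obtain ⟨-, ⟨v, rfl⟩, rfl⟩ := hw
    have h1 : ρ (c0.out) (ι v) ∈ U := hc0 (by rw [hSc]; exact ⟨ι v, ⟨v, rfl⟩, rfl⟩)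
    have h2 : ρ (c.out * (c0.out)⁻¹) (ρ (c0.out) (ι v)) ∈ U := hU _ _ h1
    rwa [rep_apply_apply, inv_mul_cancel_right] at h2
  -- main inductive argument on the size of the support
  have main : ∀ (n : ℕ) (u : W), u ∈ U → u ≠ 0 → (Φ.symm u).support.card ≤ n → U = ⊤ := by
    intro n
    induction n using Nat.strong_induction_on with
    | _ n IH =>
    intro u huU hune hcard
    set T : Finset (G ⧸ H) := (Φ.symm u).support with hT
    have hmemT : ∀ c : G ⧸ H, c ∈ T ↔ π c u ≠ 0 := by
      intro c
      rw [hT, DFinsupp.mem_support_iff, hπapp]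
      exact not_congr ⟨fun h => by rw [h]; rfl, fun h => Subtype.ext h⟩
    have hTne : T.Nonempty := by
      rcases Finset.eq_empty_or_nonempty T with hemp | hne
      · exfalso
        refine hune (pzero u fun c => ?_)
        by_contra hc
        exact (Finset.eq_empty_iff_forall_notMem.mp hemp c) ((hmemT c).mpr hc)
      · exact hne
    obtain ⟨c0, hc0T⟩ := hTne
    -- the H-submodule generated by u
    set M : Submodule F W := Submodule.span F (Set.range fun h : H => ρ (h : G) u) with hM
    have huM : u ∈ M := by
      refine Submodule.subset_span ⟨1, ?_⟩
      simp
    have hMU : M ≤ U := by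
      rw [hM, Submodule.span_le]
      rintro - ⟨h, rfl⟩
      exact hU _ _ huU
    have hMinv : ∀ (h : H), ∀ m ∈ M, ρ (h : G) m ∈ M := by
      intro h m hm
      induction hm using Submodule.span_induction with
      | mem w hw =>
        obtain ⟨h', rfl⟩ := hw
        refine Submodule.subset_span ⟨h * h', ?_⟩
        rw [rep_apply_apply]
        norm_cast
      | zero => rw [map_zero]; exact Submodule.zero_mem M
      | add a b _ _ ha hb => rw [map_add]; exact Submodule.add_mem M ha hb
      | smul r a _ ha => rw [map_smul]; exact Submodule.smul_mem M r ha
    have hMvanish : ∀ c : G ⧸ H, c ∉ T → ∀ m ∈ M, π c m = 0 := by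
      intro c hcT m hm
      have hπcu : π c u = 0 := by
        by_contra hc
        exact hcT ((hmemT c).mpr hc)
      induction hm using Submodule.span_induction with
      | mem w hw =>
        obtain ⟨h', rfl⟩ := hw
        rw [pequiv, hπcu, map_zero]
      | zero => rw [map_zero]
      | add a b _ _ ha hb => rw [map_add, ha, hb, add_zero]
      | smul r a _ ha => rw [map_smul, ha, smul_zero]
    by_cases hT2 : ∃ c1 ∈ T, c1 ≠ c0
    · -- at least two elements in the support
      obtain ⟨c1, hc1T, hc1ne⟩ := hT2
      by_cases hker : ∃ m ∈ M, m ≠ 0 ∧ ((π c0 m = 0) ∨ (π c1 m = 0))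
      · -- found an element with smaller support: use the induction hypothesis
        obtain ⟨m, hmM, hmne, hmc⟩ := hker
        obtain ⟨c, hcT, hπc⟩ : ∃ c ∈ T, π c m = 0 := by
          rcases hmc with h | h
          exacts [⟨c0, hc0T, h⟩, ⟨c1, hc1T, h⟩]
        have hsub : (Φ.symm m).support ⊆ T.erase c := by
          intro c' hc'
          rw [DFinsupp.mem_support_iff] at hc'
          have hπ' : π c' m ≠ 0 := fun h => hc' (Subtype.ext h)
          refine Finset.mem_erase.mpr ⟨fun h => hπ' (h ▸ hπc), ?_⟩
          by_contra hc'T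
          exact hπ' (hMvanish c' hc'T m hmM)
        have hlt : (Φ.symm m).support.card < n := by
          calc (Φ.symm m).support.card ≤ (T.erase c).card := Finset.card_le_card hsub
            _ < T.card := Finset.card_erase_lt_of_mem hcT
            _ ≤ n := hcard
        exact IH _ hlt m (hMU hmM) hmne le_rfl
      · -- both projections are injective on M: contradiction with hconj
        push_neg at hker
        set τ : Representation F H W := ρ.comp H.subtype with hτ
        have hMinvτ : ∀ (h : H), ∀ m ∈ M, τ h m ∈ M := hMinv
        set ρM : Representation F H M := SubRep τ M hMinvτ with hρM
        have ρMcoe : ∀ (h : H) (m : M), ((ρM h m : M) : W) = ρ ((h : H) : G) (m : W) :=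
          fun h m => rfl
        have build : ∀ c : G ⧸ H, c ∈ T → (∀ m ∈ M, π c m = 0 → m = 0) →
            RepIso (ConjRep hH ((c.out)⁻¹) η) ρM := by
          intro c hcT hinjc
          set b : M →ₗ[F] W := π c ∘ₗ M.subtype with hb
          have hbinj : Function.Injective b := by
            intro m m' hmm
            have h1 : π c ((m : W) - (m' : W)) = 0 := by
              rw [map_sub]
              exact sub_eq_zero.mpr hmm
            have h2 : (m : W) - (m' : W) ∈ M := Submodule.sub_mem M m.2 m'.2
            have h3 := hinjc _ h2 h1
            exact Subtype.ext (sub_eq_zero.mp h3)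
          have hbeq : ∀ (h : H) (m : M), b (ρM h m) = τ h (b m) := by
            intro h m
            show π c ((ρM h m : M) : W) = ρ ((h : H) : G) (π c (m : W))
            rw [ρMcoe]
            exact pequiv h c (m : W)
          have hbrange : LinearMap.range b = S c := by
            have h1 : LinearMap.range b = Submodule.map (π c) M := by
              rw [hb, LinearMap.range_comp, Submodule.range_subtype]
            rw [h1]
            have hle : Submodule.map (π c) M ≤ S c := by
              rintro - ⟨m, hm, rfl⟩
              exact pmem c m
            have hinv2 : ∀ (h : H), ∀ w ∈ Submodule.map (π c) M,
                ρ ((h : H) : G) w ∈ Submodule.map (π c) M := by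
              rintro h - ⟨m, hm, rfl⟩
              exact ⟨ρ ((h : H) : G) m, hMinv h m hm, pequiv h c m⟩
            rcases irredS c (Submodule.map (π c) M) hle hinv2 with hbot | hgood
            · exfalso
              have h2 : π c u ∈ Submodule.map (π c) M := ⟨u, huM, rfl⟩
              rw [hbot, Submodule.mem_bot] at h2
              exact ((hmemT c).mp hcT) h2
            · exact hgood
          set a : V →ₗ[F] W := (ρ (c.out)) ∘ₗ ι with ha
          have hainj : Function.Injective a := (rep_injective ρ _).comp hinj
          have haeq : ∀ (h : H) (v : V), a ((ConjRep hH ((c.out)⁻¹) η) h v)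
              = τ h (a v) := by
            intro h v
            show ρ (c.out) (ι (η (conjHom hH (c.out)⁻¹ h) v)) = ρ ((h : H) : G) (ρ (c.out) (ι v))
            rw [heq, rep_apply_apply, rep_apply_apply, conjHom_coe]
            congr 1
            group
          exact transfer_iso τ a b hainj hbinj (by rw [ha, hrange, hbrange]) haeq hbeq
        have iso0 := build c0 hc0T (fun m hm h0 => by
          by_contra hne; exact (hker m hm hne).1 h0)
        have iso1 := build c1 hc1T (fun m hm h0 => by
          by_contra hne; exact (hker m hm hne).2 h0)
        have hiso := repIso_trans iso0 (repIso_symm iso1)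
        have hne' : (((c0.out)⁻¹ : G) : G ⧸ H) ≠ (((c1.out)⁻¹ : G) : G ⧸ H) := by
          intro hcon
          rw [QuotientGroup.mk_inv, QuotientGroup.mk_inv] at hcon
          have h1 := inv_injective hcon
          rw [QuotientGroup.out_eq', QuotientGroup.out_eq'] at h1
          exact hc1ne h1.symm
        exact (hconj _ _ hne' hiso).elim
    · -- the support is just {c0} : u lies in the piece S c0
      have hTsub : ∀ c : G ⧸ H, c ∈ T → c = c0 := by
        intro c hc
        by_contra hne
        exact hT2 ⟨c, hc, hne⟩
      have huS : u ∈ S c0 := by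
        have h1 : Φ.symm u = DirectSum.of (fun c => S c) c0 ((Φ.symm u) c0) := by
          refine DFinsupp.ext fun j => ?_
          rcases eq_or_ne j c0 with rfl | hne
          · rw [DirectSum.of_eq_same]
          · have hjT : j ∉ T := fun h => hne (hTsub j h)
            have : ((Φ.symm u) j : W) = 0 := by
              rw [← hπapp]
              by_contra hc
              exact hjT ((hmemT j).mpr hc)
            rw [DirectSum.of_eq_of_ne _ _ _ hne]
            exact Subtype.ext this
        have h2 : Φ (DirectSum.of (fun c => S c) c0 ((Φ.symm u) c0)) = u := by
          rw [← h1, Φ.apply_symm_apply]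
        rw [← h2, hΦ, LinearEquiv.ofBijective_apply, coeLinearMap_of]
        exact ((Φ.symm u) c0).2
      have hN : U ⊓ S c0 = S c0 := by
        have hinv3 : ∀ (h : H), ∀ w ∈ U ⊓ S c0, ρ ((h : H) : G) w ∈ U ⊓ S c0 := by
          intro h w hw
          exact ⟨hU _ _ hw.1, smapH h c0 w hw.2⟩
        rcases irredS c0 (U ⊓ S c0) inf_le_right hinv3 with hbot | hSc0
        · exfalso
          have : u ∈ U ⊓ S c0 := ⟨huU, huS⟩
          rw [hbot, Submodule.mem_bot] at this
          exact hune this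
        · exact hSc0
      exact stepTop c0 (by rw [← hN]; exact inf_le_left)
  exact main (Φ.symm u).support.card u huU hune le_rfl

end Irred


section Convert

variable {F : Type*} [Field F] {G : Type*} [Group G]

lemma induced_from_conj_self {H : Subgroup G} [hHn : H.Normal] (hH : H.Normal) (x : G)
    {V W : Type*} [AddCommGroup V] [Module F V] [AddCommGroup W] [Module F W]
    {η : Representation F H V} {ρ : Representation F G W}
    (hind : IsInducedFrom H (ConjRep hH x η) ρ) : IsInducedFrom H η ρ := by
  have h1 := isInducedFrom_conj (hHn := hHn) hH x⁻¹ hind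
  rwa [conjRep_conjRep, mul_inv_cancel, conjRep_one] at h1

end Convert

/-- If the `G/H`-orbit of the irreducible representation `η` consists of `p`
distinct points `η = η_1, …, η_p`, then the induced representations `η_i↑` are all equivalent
to a common representation, which is irreducible. -/
theorem stmt_1 {F : Type*} [Field F] [IsAlgClosed F] {G : Type*} [Group G] [Fintype G]
    (hchar : CharZero F ∨ Nat.Coprime (ringChar F) (Fintype.card G))
    (p : ℕ) (hp : p.Prime) (H : Subgroup G) [hH : H.Normal] (hidx : H.index = p)
    {V : Type*} [AddCommGroup V] [Module F V]
    (η : Representation F H V) (hirr : RepIrred η)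
    (g : Fin p → G) (hg1 : g ⟨0, hp.pos⟩ = 1)
    (hdist : ∀ i j, i ≠ j → ¬ RepIso (ConjRep hH (g i) η) (ConjRep hH (g j) η))
    (horb : ∀ y : G, ∃ i, RepIso (ConjRep hH y η) (ConjRep hH (g i) η)) :
    (∀ (i : Fin p) {W : Type*} [AddCommGroup W] [Module F W] (ρ : Representation F G W),
        IsInducedFrom H (ConjRep hH (g i) η) ρ → RepIrred ρ) ∧
    (∀ (i j : Fin p) {W W' : Type*} [AddCommGroup W] [Module F W]
        [AddCommGroup W'] [Module F W']
        (ρ : Representation F G W) (ρ' : Representation F G W'),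
        IsInducedFrom H (ConjRep hH (g i) η) ρ → IsInducedFrom H (ConjRep hH (g j) η) ρ' →
        RepIso ρ ρ') := by
  classical
  haveI : Fintype (G ⧸ H) := Fintype.ofFinite _
  have hcardq : Fintype.card (G ⧸ H) = p := by
    rw [← Nat.card_eq_fintype_card, ← Subgroup.index_eq_card, hidx]
  have hcosetIso : ∀ (x y : G), (x : G ⧸ H) = (y : G ⧸ H) →
      RepIso (ConjRep hH x η) (ConjRep hH y η) := by
    intro x y hxy
    have hmem : x⁻¹ * y ∈ H := QuotientGroup.eq.mp hxy
    set h : H := ⟨x⁻¹ * y, hmem⟩ with hh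
    have hy : x * ((h : H) : G) = y := by rw [hh]; exact mul_inv_cancel_left _ _
    have h1 : ConjRep hH y η = ConjRep hH ((h : H) : G) (ConjRep hH x η) := by
      rw [conjRep_conjRep, hy]
    rw [h1]
    exact repIso_symm (conjRep_coe_iso hH h (ConjRep hH x η))
  have hinjψ : Function.Injective (fun i : Fin p => ((g i : G) : G ⧸ H)) := by
    intro i j hij
    by_contra hne
    exact hdist i j hne (hcosetIso _ _ hij)
  have hsurjψ : Function.Surjective (fun i : Fin p => ((g i : G) : G ⧸ H)) :=
    ((Fintype.bijective_iff_injective_and_card _).mpr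
      ⟨hinjψ, by rw [Fintype.card_fin, hcardq]⟩).2
  have hconj : ∀ x y : G, (x : G ⧸ H) ≠ (y : G ⧸ H) →
      ¬ RepIso (ConjRep hH x η) (ConjRep hH y η) := by
    intro x y hne hiso
    obtain ⟨i, hi⟩ := hsurjψ (x : G ⧸ H)
    obtain ⟨j, hj⟩ := hsurjψ (y : G ⧸ H)
    have e1 : RepIso (ConjRep hH (g i) η) (ConjRep hH x η) := hcosetIso _ _ hi
    have e2 : RepIso (ConjRep hH (g j) η) (ConjRep hH y η) := hcosetIso _ _ hj
    have e3 : RepIso (ConjRep hH (g i) η) (ConjRep hH (g j) η) :=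
      repIso_trans (repIso_trans e1 hiso) (repIso_symm e2)
    rcases eq_or_ne i j with rfl | hijne
    · exact hne (hi.symm.trans hj)
    · exact hdist i j hijne e3
  constructor
  · intro i W _ _ ρ hindW
    exact induced_irred hH hirr hconj (induced_from_conj_self hH (g i) hindW)
  · intro i j W W' _ _ _ _ ρ ρ' h1 h2
    exact induced_unique (induced_from_conj_self hH (g i) h1)
      (induced_from_conj_self hH (g j) h2)
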